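/- Let d ≥ 1, let R > 0, and let t ∈ ℝ^d (with the Euclidean norm) satisfy ‖t‖ ≤ 2R. Then the Lebesgue volume of the intersection of the two open balls of radius R centred at 0 and at t equals (2 π^{(d−1)/2} / Γ((d+1)/2)) · R^d · ∫_{‖t‖/(2R)}^{1} (1 − v²)^{(d−1)/2} dv. -/

import Mathlib

open Real Set MeasureTheory

lemma vol_ball_any (n : ℕ) {ρ : ℝ} (hρ : 0 < ρ) :
    volume (Metric.ball (0 : EuclideanSpace ℝ (Fin n)) ρ)
      = ENNReal.ofReal ρ ^ n * ENNReal.ofReal (Real.sqrt π ^ n / Real.Gamma (n / 2 + 1)) := by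
  rcases Nat.eq_zero_or_pos n with rfl | hn
  · have : Metric.ball (0 : EuclideanSpace ℝ (Fin 0)) ρ = Set.univ := by
      apply Set.eq_univ_iff_forall.2
      intro x
      simpa [Subsingleton.elim x 0] using hρ
    simp [this, volume_euclideanSpace_eq_dirac, Real.Gamma_one]
  · haveI : Nonempty (Fin n) := ⟨⟨0, hn⟩⟩
    rw [EuclideanSpace.volume_ball]
    simp [Fintype.card_fin]

lemma mem_ball_pi {k : ℕ} (z : Fin k → ℝ) (c : EuclideanSpace ℝ (Fin k)) (ρ : ℝ) :
    (MeasurableEquiv.toLp 2 (Fin k → ℝ)) z ∈ Metric.ball c ρ ↔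
      Real.sqrt (∑ i, (z i - c i) ^ 2) < ρ := by
  rw [Metric.mem_ball, EuclideanSpace.dist_eq]
  simp_rw [MeasurableEquiv.coe_toLp,
    Real.dist_eq, sq_abs]

lemma vol_inter_special (n : ℕ) {r R : ℝ} (hr : 0 ≤ r) (hR : 0 < R) (hr2 : r ≤ 2 * R) :
    volume (Metric.ball (0 : EuclideanSpace ℝ (Fin (n + 1))) R ∩
        Metric.ball (r • EuclideanSpace.single (0 : Fin (n + 1)) (1 : ℝ)) R)
      = ENNReal.ofReal (Real.sqrt π ^ n / Real.Gamma (n / 2 + 1)) *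
          ENNReal.ofReal
            (∫ x in (r - R)..R, (Real.sqrt (min (R ^ 2 - x ^ 2) (R ^ 2 - (x - r) ^ 2))) ^ n) := by
  set w : EuclideanSpace ℝ (Fin (n + 1)) :=
    r • EuclideanSpace.single (0 : Fin (n + 1)) (1 : ℝ) with hw
  set m : ℝ → ℝ := fun x => min (R ^ 2 - x ^ 2) (R ^ 2 - (x - r) ^ 2) with hm
  have hmeas : MeasurableSet
      (Metric.ball (0 : EuclideanSpace ℝ (Fin (n + 1))) R ∩ Metric.ball w R) :=
    measurableSet_ball.inter measurableSet_ball
  rw [← (show MeasurePreserving (MeasurableEquiv.toLp 2 (Fin (n + 1) → ℝ)) volume volume from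
      by simpa only [MeasurableEquiv.symm_symm] using (EuclideanSpace.volume_preserving_symm_measurableEquiv_toLp (Fin (n + 1))).symm).measure_preimage
    hmeas.nullMeasurableSet]
  have hmeas2 : MeasurableSet ((MeasurableEquiv.toLp 2 (Fin (n + 1) → ℝ)) ⁻¹'
      (Metric.ball (0 : EuclideanSpace ℝ (Fin (n + 1))) R ∩ Metric.ball w R)) :=
    (MeasurableEquiv.toLp 2 (Fin (n + 1) → ℝ)).measurable hmeas
  rw [← ((MeasureTheory.volume_preserving_piFinSuccAbove (fun _ : Fin (n + 1) => ℝ) 0).symm).measure_preimage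
    hmeas2.nullMeasurableSet]
  rw [MeasureTheory.Measure.volume_eq_prod, MeasureTheory.Measure.prod_apply
    ((MeasurableEquiv.piFinSuccAbove (fun _ : Fin (n + 1) => ℝ) 0).symm.measurable hmeas2)]
  have hslice : ∀ x₀ : ℝ,
      (Prod.mk x₀ ⁻¹' ((MeasurableEquiv.piFinSuccAbove (fun _ : Fin (n + 1) => ℝ) 0).symm ⁻¹'
        ((MeasurableEquiv.toLp 2 (Fin (n + 1) → ℝ)) ⁻¹'
          (Metric.ball (0 : EuclideanSpace ℝ (Fin (n + 1))) R ∩ Metric.ball w R))))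
      = (MeasurableEquiv.toLp 2 (Fin n → ℝ)) ⁻¹'
          (Metric.ball (0 : EuclideanSpace ℝ (Fin n)) (Real.sqrt (m x₀))) := by
    intro x₀
    ext y
    simp only [Set.mem_preimage, Set.mem_inter_iff, MeasurableEquiv.piFinSuccAbove_symm_apply,
      Fin.insertNthEquiv_apply, Fin.insertNth_zero']
    rw [mem_ball_pi, mem_ball_pi, mem_ball_pi]
    have hS : 0 ≤ ∑ j, (y j - (0 : EuclideanSpace ℝ (Fin n)) j) ^ 2 :=
      Finset.sum_nonneg fun j _ => sq_nonneg _
    rw [Real.sqrt_lt' hR, Real.sqrt_lt' hR, Real.sqrt_lt_sqrt_iff hS]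
    have hzero : ∀ i : Fin (n + 1), (0 : EuclideanSpace ℝ (Fin (n + 1))) i = 0 := fun _ => rfl
    have hzero' : ∀ j : Fin n, (0 : EuclideanSpace ℝ (Fin n)) j = 0 := fun _ => rfl
    have hw0 : w 0 = r := by
      simp [hw, EuclideanSpace.single_apply]
    have hws : ∀ j : Fin n, w j.succ = 0 := by
      intro j
      simp [hw, EuclideanSpace.single_apply, Fin.succ_ne_zero]
    rw [Fin.sum_univ_succ, Fin.sum_univ_succ]
    simp only [Fin.insertNthEquiv_apply, Fin.insertNth_zero', Fin.cons_zero, Fin.cons_succ,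
      hzero, hzero', hw0, hws, sub_zero]
    have hmx : m x₀ = min (R ^ 2 - x₀ ^ 2) (R ^ 2 - (x₀ - r) ^ 2) := rfl
    rw [hmx, lt_min_iff]
    constructor
    · rintro ⟨h1, h2⟩
      constructor <;> nlinarith [h1, h2]
    · rintro ⟨h1, h2⟩
      constructor <;> nlinarith [h1, h2]
  simp_rw [hslice]
  have hvol : ∀ x₀ : ℝ, volume ((MeasurableEquiv.toLp 2 (Fin n → ℝ)) ⁻¹'
      (Metric.ball (0 : EuclideanSpace ℝ (Fin n)) (Real.sqrt (m x₀))))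
      = volume (Metric.ball (0 : EuclideanSpace ℝ (Fin n)) (Real.sqrt (m x₀))) := fun x₀ =>
    ((EuclideanSpace.volume_preserving_symm_measurableEquiv_toLp (Fin n)).symm).measure_preimage
      measurableSet_ball.nullMeasurableSet
  simp_rw [hvol]
  have hind : (fun x₀ : ℝ => volume (Metric.ball (0 : EuclideanSpace ℝ (Fin n))
      (Real.sqrt (m x₀))))
      = (Set.Ioo (r - R) R).indicator (fun x₀ => ENNReal.ofReal ((Real.sqrt (m x₀)) ^ n) *
          ENNReal.ofReal (Real.sqrt π ^ n / Real.Gamma (n / 2 + 1))) := by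
    funext x₀
    by_cases hx : x₀ ∈ Set.Ioo (r - R) R
    · rw [Set.indicator_of_mem hx]
      obtain ⟨h1, h2⟩ := hx
      have hm0 : 0 < m x₀ := by
        rw [hm]
        simp only [lt_min_iff]
        constructor <;> nlinarith
      rw [vol_ball_any n (Real.sqrt_pos.mpr hm0), ENNReal.ofReal_pow (Real.sqrt_nonneg _)]
    · rw [Set.indicator_of_notMem hx]
      have hm0 : m x₀ ≤ 0 := by
        simp only [Set.mem_Ioo, not_and_or, not_lt] at hx
        rw [hm]
        rcases hx with h | h
        · exact min_le_of_right_le (by nlinarith)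
        · exact min_le_of_left_le (by nlinarith)
      have : Real.sqrt (m x₀) = 0 := Real.sqrt_eq_zero'.mpr hm0
      rw [this, Metric.ball_eq_empty.mpr le_rfl, measure_empty]
  rw [hind, lintegral_indicator measurableSet_Ioo, lintegral_mul_const' _ _ ENNReal.ofReal_ne_top]
  have hcont : Continuous fun x : ℝ => (Real.sqrt (m x)) ^ n := by
    apply Continuous.pow
    apply Real.continuous_sqrt.comp
    exact Continuous.min (continuous_const.sub (continuous_pow 2))
      (continuous_const.sub ((continuous_id.sub continuous_const).pow 2))
  have hint : IntegrableOn (fun x : ℝ => (Real.sqrt (m x)) ^ n) (Set.Ioo (r - R) R) :=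
    hcont.integrableOn_Icc.mono_set Set.Ioo_subset_Icc_self
  rw [← MeasureTheory.ofReal_integral_eq_lintegral_ofReal hint
    (Filter.Eventually.of_forall fun x => by positivity)]
  rw [← MeasureTheory.integral_Ioc_eq_integral_Ioo,
    ← intervalIntegral.integral_of_le (by linarith : r - R ≤ R)]
  rw [mul_comm]


lemma calc_min (n : ℕ) {r R : ℝ} (hr : 0 ≤ r) (hR : 0 < R) (hr2 : r ≤ 2 * R) :
    ∫ x in (r - R)..R, (Real.sqrt (min (R ^ 2 - x ^ 2) (R ^ 2 - (x - r) ^ 2))) ^ n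
      = 2 * R ^ (n + 1) * ∫ v in (r / (2 * R))..1, (1 - v ^ 2) ^ ((n : ℝ) / 2) := by
  have hcont : Continuous fun x : ℝ => (Real.sqrt (min (R ^ 2 - x ^ 2) (R ^ 2 - (x - r) ^ 2))) ^ n := by
    fun_prop
  have hf : Continuous fun x : ℝ => (Real.sqrt (R ^ 2 - x ^ 2)) ^ n := by fun_prop
  have h1 : r - R ≤ r / 2 := by linarith
  have h2 : r / 2 ≤ R := by linarith
  -- split at r/2
  have hsplit : ∫ x in (r - R)..R, (Real.sqrt (min (R ^ 2 - x ^ 2) (R ^ 2 - (x - r) ^ 2))) ^ n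
      = (∫ x in (r - R)..(r / 2), (Real.sqrt (min (R ^ 2 - x ^ 2) (R ^ 2 - (x - r) ^ 2))) ^ n)
        + ∫ x in (r / 2)..R, (Real.sqrt (min (R ^ 2 - x ^ 2) (R ^ 2 - (x - r) ^ 2))) ^ n := by
    rw [intervalIntegral.integral_add_adjacent_intervals] <;>
      exact hcont.intervalIntegrable _ _
  have hright : ∫ x in (r / 2)..R, (Real.sqrt (min (R ^ 2 - x ^ 2) (R ^ 2 - (x - r) ^ 2))) ^ n
      = ∫ x in (r / 2)..R, (Real.sqrt (R ^ 2 - x ^ 2)) ^ n := by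
    apply intervalIntegral.integral_congr
    intro x hx
    dsimp only
    rw [Set.uIcc_of_le h2] at hx
    have h' : min (R ^ 2 - x ^ 2) (R ^ 2 - (x - r) ^ 2) = R ^ 2 - x ^ 2 := by
      apply min_eq_left
      nlinarith [hx.1, hx.2]
    rw [h']
  have hleft : ∫ x in (r - R)..(r / 2), (Real.sqrt (min (R ^ 2 - x ^ 2) (R ^ 2 - (x - r) ^ 2))) ^ n
      = ∫ x in (r / 2)..R, (Real.sqrt (R ^ 2 - x ^ 2)) ^ n := by
    have : ∫ x in (r - R)..(r / 2), (Real.sqrt (min (R ^ 2 - x ^ 2) (R ^ 2 - (x - r) ^ 2))) ^ n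
        = ∫ x in (r - R)..(r / 2), (Real.sqrt (R ^ 2 - (r - x) ^ 2)) ^ n := by
      apply intervalIntegral.integral_congr
      intro x hx
      dsimp only
      rw [Set.uIcc_of_le h1] at hx
      have h' : min (R ^ 2 - x ^ 2) (R ^ 2 - (x - r) ^ 2) = R ^ 2 - (x - r) ^ 2 := by
        apply min_eq_right
        nlinarith [hx.1, hx.2]
      rw [h']
      ring_nf
    rw [this, intervalIntegral.integral_comp_sub_left (fun u => (Real.sqrt (R ^ 2 - u ^ 2)) ^ n) r]
    have e1 : r - r / 2 = r / 2 := by ring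
    have e2 : r - (r - R) = R := by ring
    rw [e1, e2]
  -- substitution x = R v
  have hsub : ∫ x in (r / 2)..R, (Real.sqrt (R ^ 2 - x ^ 2)) ^ n
      = R ^ (n + 1) * ∫ v in (r / (2 * R))..1, (1 - v ^ 2) ^ ((n : ℝ) / 2) := by
    have hc : (R : ℝ) ≠ 0 := hR.ne'
    have := intervalIntegral.smul_integral_comp_mul_left
      (a := r / (2 * R)) (b := 1) (fun x => (Real.sqrt (R ^ 2 - x ^ 2)) ^ n) R
    have hab : R * (r / (2 * R)) = r / 2 := by field_simp
    rw [hab, mul_one] at this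
    rw [← this, smul_eq_mul]
    have hcong : ∫ v in (r / (2 * R))..1, (Real.sqrt (R ^ 2 - (R * v) ^ 2)) ^ n
        = ∫ v in (r / (2 * R))..1, R ^ n * (1 - v ^ 2) ^ ((n : ℝ) / 2) := by
      apply intervalIntegral.integral_congr
      intro v hv
      have hlo : 0 ≤ r / (2 * R) := by positivity
      have hhi : r / (2 * R) ≤ 1 := by rw [div_le_one (by linarith)]; linarith
      dsimp only
      rw [Set.uIcc_of_le hhi] at hv
      have hv0 : 0 ≤ v := le_trans hlo hv.1
      have hv1 : v ≤ 1 := hv.2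
      have h1v : 0 ≤ 1 - v ^ 2 := by nlinarith
      have : R ^ 2 - (R * v) ^ 2 = R ^ 2 * (1 - v ^ 2) := by ring
      rw [this, Real.sqrt_mul (by positivity), Real.sqrt_sq hR.le, mul_pow]
      congr 1
      rw [← Real.rpow_natCast (Real.sqrt (1 - v ^ 2)) n, Real.sqrt_eq_rpow,
        ← Real.rpow_mul h1v]
      congr 1
      push_cast; ring
    rw [hcong, intervalIntegral.integral_const_mul]
    ring
  rw [hsplit, hright, hleft, hsub]
  ring


/-- The volume of the intersection of two balls of radius `R` in `ℝ^d` whose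
centres are at distance `‖t‖ ≤ 2R` equals
`(2 π^{(d-1)/2} / Γ((d+1)/2)) · R^d · ∫_{‖t‖/(2R)}^1 (1-v²)^{(d-1)/2} dv`. -/
theorem volume_inter_balls (d : ℕ) (hd : 1 ≤ d) (R : ℝ) (hR : 0 < R)
    (t : EuclideanSpace ℝ (Fin d)) (ht : ‖t‖ ≤ 2 * R) :
    MeasureTheory.volume (Metric.ball (0 : EuclideanSpace ℝ (Fin d)) R ∩ Metric.ball t R)
      = ENNReal.ofReal
        ((2 * Real.pi ^ (((d : ℝ) - 1) / 2) / Real.Gamma (((d : ℝ) + 1) / 2)) * R ^ d *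
          ∫ v in (‖t‖ / (2 * R))..1, (1 - v ^ 2) ^ (((d : ℝ) - 1) / 2)) := by
  obtain ⟨n, rfl⟩ : ∃ n, d = n + 1 := ⟨d - 1, (Nat.succ_pred_eq_of_pos hd).symm⟩
  have hnw : ‖t‖ = ‖(‖t‖ • EuclideanSpace.single (0 : Fin (n + 1)) (1 : ℝ) :
      EuclideanSpace ℝ (Fin (n + 1)))‖ := by
    rw [norm_smul, EuclideanSpace.norm_single, norm_one, mul_one, Real.norm_eq_abs,
      abs_of_nonneg (norm_nonneg t)]
  set f := Submodule.reflection (ℝ ∙ (t - ‖t‖ • EuclideanSpace.single (0 : Fin (n + 1)) (1 : ℝ)))ᗮ with hf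
  have hft : f t = ‖t‖ • EuclideanSpace.single (0 : Fin (n + 1)) (1 : ℝ) :=
    Submodule.reflection_sub hnw
  have hpre : (⇑f) ⁻¹' (Metric.ball (0 : EuclideanSpace ℝ (Fin (n + 1))) R ∩
        Metric.ball (‖t‖ • EuclideanSpace.single (0 : Fin (n + 1)) (1 : ℝ)) R)
      = Metric.ball (0 : EuclideanSpace ℝ (Fin (n + 1))) R ∩ Metric.ball t R := by
    ext x
    simp only [Set.mem_preimage, Set.mem_inter_iff, Metric.mem_ball]
    rw [show dist (f x) 0 = dist x 0 by rw [← f.dist_map x 0, map_zero],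
      show dist (f x) (‖t‖ • EuclideanSpace.single (0 : Fin (n + 1)) (1 : ℝ)) = dist x t by
        rw [← f.dist_map x t, hft]]
  rw [← hpre, f.measurePreserving.measure_preimage
    (measurableSet_ball.inter measurableSet_ball).nullMeasurableSet]
  rw [vol_inter_special n (norm_nonneg t) hR ht]
  rw [calc_min n (norm_nonneg t) hR ht]
  have e1 : (((n + 1 : ℕ) : ℝ) - 1) / 2 = (n : ℝ) / 2 := by push_cast; ring
  have e2 : (((n + 1 : ℕ) : ℝ) + 1) / 2 = (n : ℝ) / 2 + 1 := by push_cast; ring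
  rw [e1, e2]
  have e3 : Real.pi ^ ((n : ℝ) / 2) = Real.sqrt π ^ n := by
    rw [Real.sqrt_eq_rpow, ← Real.rpow_natCast (π ^ (1 / 2 : ℝ)) n,
      ← Real.rpow_mul Real.pi_pos.le]
    congr 1
    push_cast
    ring
  rw [e3]
  have hC : 0 ≤ Real.sqrt π ^ n / Real.Gamma ((n : ℝ) / 2 + 1) :=
    div_nonneg (pow_nonneg (Real.sqrt_nonneg _) _)
      (Real.Gamma_pos_of_pos (by positivity)).le
  rw [← ENNReal.ofReal_mul hC]
  congr 1
  ring
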